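/- arXiv:2506.06990 — 5 statements merged into one kernel-verified Lean document; each statement's English description precedes it below -/
import Mathlib

section
/- If a concave function F on a polytope S_2 satisfies F(P*) ≤ F(P) at every vertex P adjacent to a vertex P* (i.e., P* is D-local), then P* is a local minimizer of F on S_2 (C-local): there exists ε > 0 such that F(P*) ≤ F(P) for all P ∈ S_2 within distance ε of P*. -/
open Finset

/-- If a concave function `F` on the polytope `S_2` satisfies
`F(P*) ≤ F(P)` at every vertex `P` adjacent to the vertex `P*` (D-local), then `P*`
is a local minimizer of `F` on `S_2` (C-local). -/
theorem dLocal_imp_cLocal {K N : ℕ}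
    (S2 : Set (Fin K → Fin N → ℝ))
    (hS2 : S2 = {P | (∀ n, ∑ k, P k n = 1) ∧ ∀ k n, 0 ≤ P k n})
    (F : (Fin K → Fin N → ℝ) → ℝ)
    (hconc : ConcaveOn ℝ S2 F)
    (Pstar : Fin K → Fin N → ℝ)
    (hPstarS2 : Pstar ∈ S2) (hPstar01 : ∀ k n, Pstar k n = 0 ∨ Pstar k n = 1)
    (hDlocal : ∀ P : Fin K → Fin N → ℝ,
      P ∈ S2 → (∀ k n, P k n = 0 ∨ P k n = 1) →
      (∃ n₀ : Fin N, (∀ n, n ≠ n₀ → ∀ k, P k n = Pstar k n) ∧ ∃ k, P k n₀ ≠ Pstar k n₀) →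
      F Pstar ≤ F P) :
    ∃ ε > 0, ∀ P ∈ S2, dist P Pstar < ε → F Pstar ≤ F P := by
  have hsum : ∀ n, ∑ k, Pstar k n = 1 := (hS2 ▸ hPstarS2).1
  have hnn : ∀ k n, 0 ≤ Pstar k n := (hS2 ▸ hPstarS2).2
  -- each column of Pstar has a unique 1
  have hex : ∀ n, ∃ k, Pstar k n = 1 := by
    intro n
    by_contra h
    push_neg at h
    have h0 : ∀ k, Pstar k n = 0 := fun k => (hPstar01 k n).resolve_right (h k)
    have := hsum n
    simp [h0] at this
  choose kstar hkstar using hex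
  have hzero : ∀ n k, k ≠ kstar n → Pstar k n = 0 := by
    intro n k hk
    rcases hPstar01 k n with h | h
    · exact h
    · exfalso
      have h2 : ∑ j ∈ ({k, kstar n} : Finset (Fin K)), Pstar j n ≤ ∑ j, Pstar j n :=
        Finset.sum_le_sum_of_subset_of_nonneg (Finset.subset_univ _)
          fun j _ _ => hnn j n
      rw [Finset.sum_pair hk, hsum n, h, hkstar n] at h2
      linarith
  -- adjacent vertices
  set Q : Fin N → Fin K → (Fin K → Fin N → ℝ) :=
    fun n k j m => if m = n then (if j = k then (1:ℝ) else 0) else Pstar j m with hQdef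
  have hQS2 : ∀ n k, Q n k ∈ S2 := by
    intro n k
    rw [hS2]
    refine ⟨fun m => ?_, fun j m => ?_⟩
    · by_cases hm : m = n
      · subst hm
        simp [hQdef]
      · simpa [hQdef, hm] using hsum m
    · by_cases hm : m = n
      · subst hm
        simp only [hQdef, if_pos rfl]
        split <;> norm_num
      · simp only [hQdef, if_neg hm]
        exact hnn j m
  have hFQ : ∀ n k, F Pstar ≤ F (Q n k) := by
    intro n k
    by_cases hk : k = kstar n
    · subst hk
      have hEq : Q n (kstar n) = Pstar := by
        funext j m
        by_cases hm : m = n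
        · subst hm
          by_cases hj : j = kstar m
          · simp [hQdef, hj, hkstar m]
          · simp [hQdef, hj, hzero m j hj]
        · simp [hQdef, hm]
      rw [hEq]
    · refine hDlocal (Q n k) (hQS2 n k) ?_ ⟨n, fun m hm j => by simp [hQdef, hm], ⟨k, ?_⟩⟩
      · intro j m
        by_cases hm : m = n
        · subst hm
          by_cases hj : j = k <;> simp [hQdef, hj]
        · simp only [hQdef, if_neg hm]
          exact hPstar01 j m
      · simp [hQdef, hzero n k hk]
  -- choose ε
  refine ⟨1 / ((N : ℝ) * K + 1), by positivity, ?_⟩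
  intro P hP hdist
  have hPsum : ∀ n, ∑ k, P k n = 1 := (hS2 ▸ hP).1
  have hPnn : ∀ k n, 0 ≤ P k n := (hS2 ▸ hP).2
  set w : Fin N × Fin K → ℝ := fun p => if p.2 = kstar p.1 then 0 else P p.2 p.1 with hwdef
  have hwnn : ∀ p, 0 ≤ w p := by
    intro p
    rw [hwdef]
    dsimp only
    split
    · exact le_refl 0
    · exact hPnn p.2 p.1
  have hwle : ∀ p, w p ≤ dist P Pstar := by
    intro p
    rw [hwdef]
    dsimp only
    split
    · exact dist_nonneg
    · rename_i h
      calc P p.2 p.1 = dist (P p.2 p.1) (Pstar p.2 p.1) := by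
            rw [hzero p.1 p.2 h, Real.dist_eq, sub_zero, abs_of_nonneg (hPnn _ _)]
        _ ≤ dist (P p.2) (Pstar p.2) := dist_le_pi_dist _ _ _
        _ ≤ dist P Pstar := dist_le_pi_dist _ _ _
  have hA : ∑ p, w p ≤ 1 := by
    calc ∑ p : Fin N × Fin K, w p ≤ ∑ _p : Fin N × Fin K, dist P Pstar :=
          Finset.sum_le_sum fun p _ => hwle p
      _ = (N : ℝ) * K * dist P Pstar := by
          rw [Finset.sum_const, Finset.card_univ, Fintype.card_prod, Fintype.card_fin,
            Fintype.card_fin, nsmul_eq_mul, Nat.cast_mul]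
      _ ≤ (N : ℝ) * K * (1 / ((N : ℝ) * K + 1)) := by
          apply mul_le_mul_of_nonneg_left hdist.le
          positivity
      _ ≤ 1 := by
          rw [mul_one_div, div_le_one (by positivity)]
          linarith
  set v : ℝ := 1 - ∑ p, w p with hvdef
  have hvnn : 0 ≤ v := by rw [hvdef]; linarith
  have hwsum : v + ∑ p : Fin N × Fin K, w p = 1 := by rw [hvdef]; ring
  -- the convex combination equals P
  have hcomb : v • Pstar + ∑ p : Fin N × Fin K, w p • Q p.1 p.2 = P := by
    funext j m
    have happ : (v • Pstar + ∑ p : Fin N × Fin K, w p • Q p.1 p.2) j m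
        = v * Pstar j m + ∑ p : Fin N × Fin K, w p * Q p.1 p.2 j m := by
      simp [Finset.sum_apply]
    rw [happ]
    have hinner : ∀ n, ∑ k, w (n, k) * Q n k j m =
        if m = n then w (m, j) else (∑ k, w (n, k)) * Pstar j m := by
      intro n
      by_cases hm : m = n
      · subst hm
        rw [if_pos rfl]
        rw [Finset.sum_congr rfl (fun k _ => by
          show w (m, k) * Q m k j m = if j = k then w (m, k) else 0
          simp only [hQdef, if_pos rfl]
          split <;> ring)]
        simp
      · rw [if_neg hm,
          Finset.sum_congr rfl (fun k _ => by
            show w (n, k) * Q n k j m = w (n, k) * Pstar j m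
            simp only [hQdef, if_neg hm]),
          ← Finset.sum_mul]
    have hsplit : ∑ p : Fin N × Fin K, w p * Q p.1 p.2 j m
        = ∑ n, ∑ k, w (n, k) * Q n k j m := Fintype.sum_prod_type ..
    have hAsplit : ∑ p : Fin N × Fin K, w p = ∑ n, ∑ k, w (n, k) :=
      Fintype.sum_prod_type ..
    rw [hsplit, Finset.sum_congr rfl fun n _ => hinner n]
    rw [← Finset.sum_erase_add _ _ (Finset.mem_univ m), if_pos rfl]
    rw [Finset.sum_congr rfl (fun n hn => by
      rw [if_neg (Ne.symm (Finset.ne_of_mem_erase hn))])]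
    rw [← Finset.sum_mul, hvdef, hAsplit,
      ← Finset.sum_erase_add _ _ (Finset.mem_univ m)]
    have hC : ∑ k, w (m, k) = 1 - P (kstar m) m := by
      rw [Finset.sum_congr rfl (fun k _ => by
        show w (m, k) = P k m - (if k = kstar m then P (kstar m) m else 0)
        rw [hwdef]
        dsimp only
        by_cases hk : k = kstar m
        · subst hk; simp
        · simp [hk]),
        Finset.sum_sub_distrib, hPsum m, Finset.sum_ite_eq' Finset.univ (kstar m)
          (fun _ => P (kstar m) m)]
      simp
    by_cases hj : j = kstar m
    · subst hj
      rw [hwdef]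
      dsimp only
      rw [if_pos rfl, hkstar m, hC]
      ring
    · rw [hzero m j hj, hwdef]
      dsimp only
      rw [if_neg hj]
      ring
  -- Jensen's inequality
  have hJ := hconc.map_add_sum_le (t := Finset.univ) (w := w)
    (p := fun p : Fin N × Fin K => Q p.1 p.2) (q := Pstar) (v := v)
    (fun p _ => hwnn p) hwsum (fun p _ => hQS2 p.1 p.2) hvnn hPstarS2
  rw [hcomb] at hJ
  have hlow : F Pstar ≤ v • F Pstar + ∑ p : Fin N × Fin K, w p • F (Q p.1 p.2) := by
    have h1 : ∑ p : Fin N × Fin K, w p * F Pstar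
        ≤ ∑ p : Fin N × Fin K, w p * F (Q p.1 p.2) :=
      Finset.sum_le_sum fun p _ => mul_le_mul_of_nonneg_left (hFQ p.1 p.2) (hwnn p)
    have h2 : v * F Pstar + ∑ p : Fin N × Fin K, w p * F Pstar = F Pstar := by
      rw [← Finset.sum_mul, ← add_mul, hwsum, one_mul]
    simp only [smul_eq_mul]
    linarith
  linarith [hlow.trans hJ]
end

section
/- For a Bregman divergence D_φ and any nonnegative weights a_n with Σ a_n > 0 and points x_n ∈ dom(φ), the weighted mean μ = (Σ a_n x_n)/(Σ a_n) is the unique minimizer over c ∈ int dom(φ) of Σ_n a_n D_φ(x_n, c), provided μ ∈ int dom(φ). -/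
open Finset

/-- Strict gradient inequality for a strictly convex function. -/
lemma strict_grad_ineq {d : ℕ} {dom : Set (Fin d → ℝ)} (hdom : Convex ℝ dom)
    {φ : (Fin d → ℝ) → ℝ} (hφ : StrictConvexOn ℝ dom φ)
    {L : (Fin d → ℝ) →L[ℝ] ℝ} {c μ : Fin d → ℝ}
    (hL : HasFDerivAt φ L c) (hc : c ∈ dom) (hμ : μ ∈ dom) (hne : μ ≠ c) :
    φ c + L (μ - c) < φ μ := by
  set v : Fin d → ℝ := μ - c with hv
  set g : ℝ → ℝ := fun t => φ (c + t • v) with hg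
  have hmem : ∀ t ∈ Set.Icc (0:ℝ) 1, c + t • v ∈ dom := by
    intro t ht
    have := hdom hc hμ (a := 1 - t) (b := t) (by linarith [ht.2]) ht.1 (by ring)
    convert this using 1
    rw [hv]; module
  have hgconv : ConvexOn ℝ (Set.Icc (0:ℝ) 1) g := by
    refine ⟨convex_Icc 0 1, fun s hs t ht a b hba hbb hab => ?_⟩
    have h1 : c + (a • s + b • t) • v = a • (c + s • v) + b • (c + t • v) := by
      obtain rfl : b = 1 - a := by linarith
      simp only [smul_eq_mul]; rw [hv]; module
    show g (a • s + b • t) ≤ a • g s + b • g t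
    rw [hg]
    simp only []
    rw [h1]
    exact hφ.convexOn.2 (hmem s hs) (hmem t ht) hba hbb hab
  have hg0 : g 0 = φ c := by rw [hg]; simp
  have hg1 : g 1 = φ μ := by rw [hg, hv]; simp
  have hgd : HasDerivAt g (L v) 0 := by
    have h1 : HasDerivAt (fun t : ℝ => c + t • v) v 0 := by
      simpa using ((hasDerivAt_id (0:ℝ)).smul_const v).const_add c
    have hL' : HasFDerivAt φ L (c + (0:ℝ) • v) := by simpa using hL
    exact hL'.comp_hasDerivAt (0:ℝ) h1
  have hslope : Filter.Tendsto (fun t => (g t - g 0) / t) (nhdsWithin 0 (Set.Ioi 0))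
      (nhds (L v)) := by
    have h2 := (hasDerivAt_iff_tendsto_slope.mp hgd).mono_left
      (nhdsWithin_mono 0 (fun t ht => ne_of_gt ht : Set.Ioi (0:ℝ) ⊆ {0}ᶜ))
    refine h2.congr' ?_
    filter_upwards [self_mem_nhdsWithin] with t ht
    rw [slope_def_field]; ring
  have hbound : L v ≤ (g (1/2) - g 0) / (1/2 : ℝ) := by
    refine le_of_tendsto hslope ?_
    have hIoo : Set.Ioo (0:ℝ) (1/2) ∈ nhdsWithin 0 (Set.Ioi 0) :=
      Ioo_mem_nhdsGT_of_mem ⟨le_refl 0, by norm_num⟩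
    filter_upwards [hIoo] with t ht
    have := hgconv.secant_mono (a := (0:ℝ)) (x := t) (y := (1/2:ℝ)) ⟨le_refl 0, by norm_num⟩
      ⟨ht.1.le, by linarith [ht.2]⟩ ⟨by norm_num, by norm_num⟩
      (ne_of_gt ht.1) (by norm_num) (by linarith [ht.2])
    simpa using this
  have hmid : g (1/2 : ℝ) = φ ((1/2 : ℝ) • c + (1/2 : ℝ) • μ) := by
    rw [hg]; simp only []; congr 1; rw [hv]; module
  have hstrict : φ ((1/2 : ℝ) • c + (1/2 : ℝ) • μ) < (1/2 : ℝ) * φ c + (1/2 : ℝ) * φ μ := by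
    have := hφ.2 hc hμ (Ne.symm hne) (by norm_num : (0:ℝ) < 1/2)
      (by norm_num : (0:ℝ) < 1/2) (by norm_num)
    simpa using this
  rw [hmid] at hbound
  rw [hg0] at hbound
  have : L v ≤ 2 * φ ((1/2:ℝ) • c + (1/2:ℝ) • μ) - 2 * φ c := by
    rw [div_eq_mul_inv] at hbound; linarith [hbound]
  linarith

/-- For a Bregman divergence `D_φ`, nonnegative weights `a` with positive sum,
and points `x n ∈ dom φ`, the weighted mean `μ = (Σ a n • x n) / (Σ a n)` is the unique
minimizer over `c ∈ interior (dom φ)` of `Σ_n a n * D (x n) c`, provided `μ ∈ interior (dom φ)`. -/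
theorem bregman_weighted_mean_unique_minimizer {d N : ℕ}
    (dom : Set (Fin d → ℝ)) (hdom : Convex ℝ dom)
    (φ : (Fin d → ℝ) → ℝ) (hφ : StrictConvexOn ℝ dom φ)
    (f' : (Fin d → ℝ) → (Fin d → ℝ) →L[ℝ] ℝ)
    (hdiff : ∀ y ∈ interior dom, HasFDerivAt φ (f' y) y)
    (D : (Fin d → ℝ) → (Fin d → ℝ) → ℝ)
    (hD : ∀ x y, D x y = φ x - φ y - f' y (x - y))
    (a : Fin N → ℝ) (ha : ∀ n, 0 ≤ a n) (hsum : 0 < ∑ n, a n)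
    (x : Fin N → (Fin d → ℝ)) (hx : ∀ n, x n ∈ dom)
    (μ : Fin d → ℝ) (hμ : μ = (∑ n, a n)⁻¹ • ∑ n, a n • x n)
    (hμdom : μ ∈ interior dom) :
    ∀ c ∈ interior dom, c ≠ μ →
      ∑ n, a n * D (x n) μ < ∑ n, a n * D (x n) c := by
  intro c hc hcne
  have hS : (∑ n, a n) ≠ 0 := ne_of_gt hsum
  have hμs : (∑ n, a n • x n) = (∑ n, a n) • μ := by
    rw [hμ, smul_smul, mul_inv_cancel₀ hS, one_smul]
  have expand : ∀ cc, ∑ n, a n * D (x n) cc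
      = (∑ n, a n * φ (x n)) - (∑ n, a n) * φ cc
        - f' cc ((∑ n, a n • x n) - (∑ n, a n) • cc) := by
    intro cc
    rw [map_sub, map_sum, map_smul]
    simp only [map_smul, smul_eq_mul, hD, mul_sub, map_sub]
    rw [Finset.sum_sub_distrib, Finset.sum_sub_distrib, ← Finset.sum_mul, Finset.sum_sub_distrib,
      ← Finset.sum_mul]
  have hμdom' : μ ∈ dom := interior_subset hμdom
  have hcdom' : c ∈ dom := interior_subset hc
  have hkey := strict_grad_ineq hdom hφ (hdiff c hc) hcdom' hμdom' (Ne.symm hcne)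
  have h1 : ∑ n, a n * D (x n) μ = (∑ n, a n * φ (x n)) - (∑ n, a n) * φ μ := by
    rw [expand, hμs, sub_self, map_zero, sub_zero]
  have h2 : ∑ n, a n * D (x n) c = (∑ n, a n * φ (x n)) - (∑ n, a n) * φ c
      - (∑ n, a n) * f' c (μ - c) := by
    rw [expand, hμs, ← smul_sub, map_smul, smul_eq_mul]
  rw [h1, h2]
  have h3 := mul_lt_mul_of_pos_left hkey hsum
  rw [mul_add] at h3
  linarith
end

section
/- When a point x_g's assignment is shifted from cluster a to cluster b by an amount α ∈ [0,1], the change in the optimal clustering loss equals Δ_α(g,a,b) = α w_g (D(x_g, c_b) − D(x_g, c_a)) − ((s_a − α w_g) D(c'_a, c_a) + (s_b + α w_g) D(c'_b, c_b)), where c_a, c_b are the weighted-mean centers before the change, c'_a, c'_b the weighted-mean centers after, and s_a, s_b the weight sums of clusters a and b before the change. -/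
open Finset

/-- Bregman bias–variance decomposition for a single weighted cluster:
the loss against any center `y` equals the loss against the weighted mean `c`
plus the total weight times `D c y`.  Purely algebraic. -/
lemma key_decomp {d N : ℕ} (φ : (Fin d → ℝ) → ℝ) (f' : (Fin d → ℝ) → (Fin d → ℝ) →L[ℝ] ℝ)
    (D : (Fin d → ℝ) → (Fin d → ℝ) → ℝ)
    (hD : ∀ x y, D x y = φ x - φ y - f' y (x - y))
    (x : Fin N → (Fin d → ℝ)) (qw : Fin N → ℝ)
    (s0 : ℝ) (hs0 : s0 = ∑ n, qw n) (hs0ne : s0 ≠ 0)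
    (c : Fin d → ℝ) (hc : c = s0⁻¹ • ∑ n, qw n • x n) (y : Fin d → ℝ) :
    ∑ n, qw n * D (x n) y = (∑ n, qw n * D (x n) c) + s0 * D c y := by
  have hsum : ∑ n, qw n • x n = s0 • c := by
    rw [hc, smul_inv_smul₀ hs0ne]
  have key : ∀ z : Fin d → ℝ,
      ∑ n, qw n * D (x n) z
        = (∑ n, qw n * φ (x n)) - s0 * φ z - s0 * ((f' z) c - (f' z) z) := by
    intro z
    have h1 : ∀ n : Fin N, qw n * D (x n) z
        = qw n * φ (x n) - qw n * φ z - (f' z) (qw n • (x n - z)) := by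
      intro n
      rw [hD, map_smul, smul_eq_mul]; ring
    simp only [h1]
    rw [Finset.sum_sub_distrib, Finset.sum_sub_distrib, ← map_sum]
    have h2 : (∑ n, qw n • (x n - z)) = s0 • (c - z) := by
      simp only [smul_sub, Finset.sum_sub_distrib, hsum, ← Finset.sum_smul, ← hs0]
    rw [h2, map_smul, smul_eq_mul, map_sub, ← Finset.sum_mul, ← hs0]
  rw [key y, key c]
  have hDcy : D c y = φ c - φ y - ((f' y) c - (f' y) y) := by rw [hD, map_sub]
  rw [hDcy]; ring

/-- When point `g`'s assignment is shifted from cluster `a` to cluster `b`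
by an amount `α ∈ [0,1]`, the change in the optimal clustering loss equals
`Δ_α(g,a,b) = α w_g (D(x_g, c_b) − D(x_g, c_a))
  − ((s_a − α w_g) D(c'_a, c_a) + (s_b + α w_g) D(c'_b, c_b))`,
where `c_a, c_b` (resp. `c'_a, c'_b`) are the weighted-mean centers before (resp. after)
the change and `s_a, s_b` the weight sums before the change. -/
theorem bregman_loss_change_of_shift {d K N : ℕ}
    (dom : Set (Fin d → ℝ)) (hdom : Convex ℝ dom)
    (φ : (Fin d → ℝ) → ℝ) (hφ : StrictConvexOn ℝ dom φ)
    (f' : (Fin d → ℝ) → (Fin d → ℝ) →L[ℝ] ℝ)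
    (hdiff : ∀ y ∈ interior dom, HasFDerivAt φ (f' y) y)
    (D : (Fin d → ℝ) → (Fin d → ℝ) → ℝ)
    (hD : ∀ x y, D x y = φ x - φ y - f' y (x - y))
    (x : Fin N → (Fin d → ℝ)) (hx : ∀ n, x n ∈ dom)
    (w : Fin N → ℝ) (hw : ∀ n, 0 < w n)
    (P : Fin K → Fin N → ℝ) (hP : ∀ k n, 0 ≤ P k n)
    (g : Fin N) (a b : Fin K) (hab : a ≠ b)
    (α : ℝ) (hα0 : 0 ≤ α) (hα1 : α ≤ 1) (hαg : α ≤ P a g)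
    (Pnew : Fin K → Fin N → ℝ)
    (hPnew : ∀ k n, Pnew k n =
      if k = a ∧ n = g then P k n - α
      else if k = b ∧ n = g then P k n + α
      else P k n)
    (s : (Fin K → Fin N → ℝ) → Fin K → ℝ)
    (hs : ∀ Q k, s Q k = ∑ n, Q k n * w n)
    (cstar : (Fin K → Fin N → ℝ) → Fin K → (Fin d → ℝ))
    (hcstar : ∀ Q k, cstar Q k = (s Q k)⁻¹ • ∑ n, (Q k n * w n) • x n)
    (F : (Fin K → Fin N → ℝ) → ℝ)
    (hF : ∀ Q, F Q = ∑ k, ∑ n, Q k n * w n * D (x n) (cstar Q k))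
    (hpos : ∀ k, 0 < s P k) (hposa : 0 < s P a - α * w g)
    (hmeans : ∀ k, cstar P k ∈ interior dom ∧ cstar Pnew k ∈ interior dom) :
    F Pnew - F P =
      α * w g * (D (x g) (cstar P b) - D (x g) (cstar P a))
      - ((s P a - α * w g) * D (cstar Pnew a) (cstar P a)
         + (s P b + α * w g) * D (cstar Pnew b) (cstar P b)) := by
  have hPa : ∀ n, Pnew a n = P a n - (if n = g then α else 0) := by
    intro n
    rw [hPnew]
    by_cases h : n = g <;> simp [h, hab]
  have hPb : ∀ n, Pnew b n = P b n + (if n = g then α else 0) := by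
    intro n
    rw [hPnew]
    by_cases h : n = g <;> simp [h, hab.symm]
  have hwg : 0 ≤ α * w g := mul_nonneg hα0 (hw g).le
  have hsa : s Pnew a = s P a - α * w g := by
    rw [hs, hs]
    have h1 : ∀ n, Pnew a n * w n = P a n * w n - (if n = g then α * w n else 0) := by
      intro n; rw [hPa]; by_cases h : n = g <;> simp [h] <;> ring
    simp only [h1, Finset.sum_sub_distrib, Finset.sum_ite_eq', Finset.mem_univ, if_true]
  have hsb : s Pnew b = s P b + α * w g := by
    rw [hs, hs]
    have h1 : ∀ n, Pnew b n * w n = P b n * w n + (if n = g then α * w n else 0) := by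
      intro n; rw [hPb]; by_cases h : n = g <;> simp [h] <;> ring
    simp only [h1, Finset.sum_add_distrib, Finset.sum_ite_eq', Finset.mem_univ, if_true]
  have hsane : s Pnew a ≠ 0 := by rw [hsa]; linarith
  have hsbne : s Pnew b ≠ 0 := by
    rw [hsb]; have := hpos b; positivity
  -- shifted sums against a fixed center
  have hshiftA : ∀ y : Fin d → ℝ,
      ∑ n, Pnew a n * w n * D (x n) y
        = (∑ n, P a n * w n * D (x n) y) - α * w g * D (x g) y := by
    intro y
    have h1 : ∀ n, Pnew a n * w n * D (x n) y
        = P a n * w n * D (x n) y - (if n = g then α * w n * D (x n) y else 0) := by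
      intro n; rw [hPa]; by_cases h : n = g <;> simp [h] <;> ring
    simp only [h1, Finset.sum_sub_distrib, Finset.sum_ite_eq', Finset.mem_univ, if_true]
  have hshiftB : ∀ y : Fin d → ℝ,
      ∑ n, Pnew b n * w n * D (x n) y
        = (∑ n, P b n * w n * D (x n) y) + α * w g * D (x g) y := by
    intro y
    have h1 : ∀ n, Pnew b n * w n * D (x n) y
        = P b n * w n * D (x n) y + (if n = g then α * w n * D (x n) y else 0) := by
      intro n; rw [hPb]; by_cases h : n = g <;> simp [h] <;> ring
    simp only [h1, Finset.sum_add_distrib, Finset.sum_ite_eq', Finset.mem_univ, if_true]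
  -- key decompositions
  have keyA := key_decomp φ f' D hD x (fun n => Pnew a n * w n) (s Pnew a)
    (hs Pnew a) hsane (cstar Pnew a) (hcstar Pnew a) (cstar P a)
  have keyB := key_decomp φ f' D hD x (fun n => Pnew b n * w n) (s Pnew b)
    (hs Pnew b) hsbne (cstar Pnew b) (hcstar Pnew b) (cstar P b)
  -- reduce to clusters a and b
  rw [hF, hF, ← Finset.sum_sub_distrib]
  have hzero : ∀ k ∈ (univ : Finset (Fin K)), k ∉ ({a, b} : Finset (Fin K)) →
      ((∑ n, Pnew k n * w n * D (x n) (cstar Pnew k))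
        - ∑ n, P k n * w n * D (x n) (cstar P k)) = 0 := by
    intro k _ hk
    simp only [Finset.mem_insert, Finset.mem_singleton, not_or] at hk
    have hPk : ∀ n, Pnew k n = P k n := by
      intro n; rw [hPnew]; simp [hk.1, hk.2]
    have hck : cstar Pnew k = cstar P k := by
      rw [hcstar, hcstar, hs, hs]
      simp only [hPk]
    rw [hck, sub_eq_zero]
    exact Finset.sum_congr rfl fun n _ => by rw [hPk]
  rw [← Finset.sum_subset (Finset.subset_univ ({a, b} : Finset (Fin K))) hzero,
    Finset.sum_pair hab]
  have hA : (∑ n, Pnew a n * w n * D (x n) (cstar Pnew a))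
      - ∑ n, P a n * w n * D (x n) (cstar P a)
      = - α * w g * D (x g) (cstar P a)
        - (s P a - α * w g) * D (cstar Pnew a) (cstar P a) := by
    have := hshiftA (cstar P a)
    rw [hsa] at keyA
    linarith [keyA, this]
  have hB : (∑ n, Pnew b n * w n * D (x n) (cstar Pnew b))
      - ∑ n, P b n * w n * D (x n) (cstar P b)
      = α * w g * D (x g) (cstar P b)
        - (s P b + α * w g) * D (cstar Pnew b) (cstar P b) := by
    have := hshiftB (cstar P b)
    rw [hsb] at keyB
    linarith [keyB, this]
  rw [hA, hB]; ring
end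

section
/- Suppose all cluster centers of C*_P are distinct and the set A(C*_P) of optimal 0/1 assignments for fixed centers C*_P contains more than one element. Then A(C*_P) ∩ T(P) is nonempty, and transitioning from P to any P' ∈ A(C*_P) ∩ T(P) strictly decreases the clustering loss: F(P') < F(P). In particular, if (P, C*_P) is C-local with distinct centers, then A(C*_P) is a singleton. -/
open Finset

lemma grad_le' {d : ℕ} {dom : Set (Fin d → ℝ)} {φ : (Fin d → ℝ) → ℝ}
    (hφ : ConvexOn ℝ dom φ) {g : (Fin d → ℝ) →L[ℝ] ℝ} {y : Fin d → ℝ}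
    (hy : y ∈ dom) (hd : HasFDerivAt φ g y) {z : Fin d → ℝ} (hz : z ∈ dom) :
    g (z - y) ≤ φ z - φ y := by
  rcases eq_or_ne z y with rfl | hne
  · simp
  set γ : ℝ → (Fin d → ℝ) := fun t => y + t • (z - y) with hγdef
  have hγmem : ∀ t ∈ Set.Icc (0:ℝ) 1, γ t ∈ dom := by
    intro t ht
    have : γ t = (1 - t) • y + t • z := by
      funext i
      simp [hγdef, Pi.smul_apply, smul_eq_mul]
      ring
    rw [this]
    exact hφ.1 hy hz (by linarith [ht.2]) ht.1 (by ring)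
  have hconv : ConvexOn ℝ (Set.Icc (0:ℝ) 1) (fun t => φ (γ t)) := by
    refine ⟨convex_Icc _ _, ?_⟩
    intro t₁ h₁ t₂ h₂ a b ha hb hab
    have hkey : γ (a • t₁ + b • t₂) = a • γ t₁ + b • γ t₂ := by
      have hb' : b = 1 - a := by linarith
      subst hb'
      funext i
      simp [hγdef, Pi.smul_apply, smul_eq_mul]
      ring
    simp only []
    rw [hkey]
    exact hφ.2 (hγmem t₁ h₁) (hγmem t₂ h₂) ha hb hab
  have h1 : HasDerivAt γ (z - y) 0 := by
    have h := ((hasDerivAt_id (0:ℝ)).smul_const (z - y)).const_add y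
    simpa [hγdef] using h
  have h2 : γ 0 = y := by simp [hγdef]
  have hder : HasDerivAt (fun t => φ (γ t)) (g (z - y)) 0 := by
    have := (h2 ▸ hd : HasFDerivAt φ g (γ 0)).comp_hasDerivAt 0 h1
    exact this
  have hslope := hconv.le_slope_of_hasDerivAt (Set.mem_Icc.2 ⟨le_refl 0, zero_le_one⟩)
    (Set.mem_Icc.2 ⟨zero_le_one, le_refl 1⟩) zero_lt_one hder
  have hγ1 : γ 1 = z := by funext i; simp [hγdef]
  rw [slope_def_field] at hslope
  simpa [hγ1, h2] using hslope

lemma grad_lt' {d : ℕ} {dom : Set (Fin d → ℝ)} {φ : (Fin d → ℝ) → ℝ}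
    (hφ : StrictConvexOn ℝ dom φ) {g : (Fin d → ℝ) →L[ℝ] ℝ} {y : Fin d → ℝ}
    (hy : y ∈ dom) (hd : HasFDerivAt φ g y) {z : Fin d → ℝ} (hz : z ∈ dom)
    (hne : z ≠ y) :
    g (z - y) < φ z - φ y := by
  set m : Fin d → ℝ := (1/2 : ℝ) • z + (1/2 : ℝ) • y with hm
  have hmmem : m ∈ dom := hφ.1 hz hy (by norm_num) (by norm_num) (by norm_num)
  have h1 : g (m - y) ≤ φ m - φ y := grad_le' hφ.convexOn hy hd hmmem
  have h2 : φ m < (1/2 : ℝ) * φ z + (1/2 : ℝ) * φ y :=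
    hφ.2 hz hy hne (by norm_num) (by norm_num) (by norm_num)
  have h3 : m - y = (1/2 : ℝ) • (z - y) := by
    funext i; simp [hm, Pi.smul_apply, smul_eq_mul]; ring
  rw [h3, map_smul, smul_eq_mul] at h1
  linarith

lemma mean_mem' {d N : ℕ} {s : Set (Fin d → ℝ)} (hs : Convex ℝ s)
    (x : Fin N → (Fin d → ℝ)) (hx : ∀ n, x n ∈ s) (a : Fin N → ℝ) (ha : ∀ n, 0 ≤ a n)
    (hpos : 0 < ∑ n, a n) :
    (∑ n, a n)⁻¹ • ∑ n, a n • x n ∈ s := by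
  rw [Finset.smul_sum]
  simp only [smul_smul]
  refine hs.sum_mem (fun n _ => mul_nonneg (inv_nonneg.2 hpos.le) (ha n)) ?_ (fun n _ => hx n)
  rw [← Finset.mul_sum, inv_mul_cancel₀ hpos.ne']

lemma mean_identity' {d N : ℕ} (φ : (Fin d → ℝ) → ℝ)
    (f' : (Fin d → ℝ) → (Fin d → ℝ) →L[ℝ] ℝ)
    (D : (Fin d → ℝ) → (Fin d → ℝ) → ℝ)
    (hD : ∀ x y, D x y = φ x - φ y - f' y (x - y))
    (x : Fin N → (Fin d → ℝ)) (a : Fin N → ℝ) (s : ℝ) (hs : s ≠ 0)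
    (hsum : s = ∑ n, a n) (μ : Fin d → ℝ) (hμ : μ = s⁻¹ • ∑ n, a n • x n)
    (c : Fin d → ℝ) :
    ∑ n, a n * D (x n) c = (∑ n, a n * D (x n) μ) + s * D μ c := by
  have hxsum : ∑ n, a n • x n = s • μ := by rw [hμ, smul_inv_smul₀ hs]
  have hlin : ∀ e : Fin d → ℝ, ∑ n, a n * (f' e) (x n - e) = s * (f' e) (μ - e) := by
    intro e
    have step : ∑ n, a n * (f' e) (x n - e) = (f' e) (∑ n, a n • (x n - e)) := by
      rw [map_sum]
      exact Finset.sum_congr rfl (fun n _ => by rw [map_smul, smul_eq_mul])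
    rw [step]
    have : ∑ n, a n • (x n - e) = s • (μ - e) := by
      simp only [smul_sub, Finset.sum_sub_distrib, ← Finset.sum_smul, hxsum, ← hsum]
    rw [this, map_smul, smul_eq_mul]
  have h1 := hlin c
  have h2 := hlin μ
  simp only [hD, mul_sub, Finset.sum_sub_distrib, ← Finset.sum_mul] at *
  rw [h1, h2, ← hsum]
  simp only [sub_self, map_zero, mul_zero]
  ring

/-- Suppose all cluster centers `C*_P` (the weighted means of the
non-empty clusters of the optimal assignment `P`) are distinct.  If the set `A(C*_P)`
of optimal 0/1 assignments for the fixed centers `C*_P` contains more than one element,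
then `A(C*_P) ∩ T(P)` is nonempty and transitioning to any `P' ∈ A(C*_P) ∩ T(P)`
strictly decreases the clustering loss `F`.  In particular, if `(P, C*_P)` is C-local
then `A(C*_P)` is a singleton. -/
theorem multiple_optimal_assignments_decrease {d K N : ℕ}
    (dom : Set (Fin d → ℝ)) (hdom : Convex ℝ dom)
    (φ : (Fin d → ℝ) → ℝ) (hφ : StrictConvexOn ℝ dom φ)
    (f' : (Fin d → ℝ) → (Fin d → ℝ) →L[ℝ] ℝ)
    (hdiff : ∀ y ∈ interior dom, HasFDerivAt φ (f' y) y)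
    (D : (Fin d → ℝ) → (Fin d → ℝ) → ℝ)
    (hD : ∀ x y, D x y = φ x - φ y - f' y (x - y))
    (x : Fin N → (Fin d → ℝ)) (hx : ∀ n, x n ∈ interior dom)
    (hxinj : Function.Injective x)
    (w : Fin N → ℝ) (hw : ∀ n, 0 < w n)
    (f : (Fin K → Fin N → ℝ) → (Fin K → (Fin d → ℝ)) → ℝ)
    (hf : ∀ P C, f P C = ∑ k, ∑ n, P k n * w n * D (x n) (C k))
    (F : (Fin K → Fin N → ℝ) → ℝ)
    (hF : ∀ P, IsLeast
      {v | ∃ C : Fin K → (Fin d → ℝ), (∀ k, C k ∈ interior dom) ∧ v = f P C} (F P))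
    (S1 : Set (Fin K → Fin N → ℝ))
    (hS1 : S1 = {P | (∀ n, ∑ k, P k n = 1) ∧ ∀ k n, P k n = 0 ∨ P k n = 1})
    (P : Fin K → Fin N → ℝ) (hPS1 : P ∈ S1)
    (hnonempty : ∀ k, ∃ n, P k n = 1)
    (Cstar : Fin K → (Fin d → ℝ))
    (hCstar : ∀ k, Cstar k = (∑ n, P k n * w n)⁻¹ • ∑ n, (P k n * w n) • x n)
    (hCint : ∀ k, Cstar k ∈ interior dom)
    (hdistinct : Function.Injective Cstar)
    (A : Set (Fin K → Fin N → ℝ))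
    (hA : A = {Q ∈ S1 | ∀ Q' ∈ S1, f Q Cstar ≤ f Q' Cstar})
    (hPA : P ∈ A)
    (T : Set (Fin K → Fin N → ℝ))
    (hT : T = {Q ∈ S1 | ∃ n₀ : Fin N,
      (∀ n, n ≠ n₀ → ∀ k, Q k n = P k n) ∧ ∃ k, Q k n₀ ≠ P k n₀}) :
    (A.Nontrivial → (A ∩ T).Nonempty ∧ ∀ P' ∈ A ∩ T, F P' < F P) ∧
    ((∃ ε > 0, ∀ Q : Fin K → Fin N → ℝ,
        ((∀ n, ∑ k, Q k n = 1) ∧ ∀ k n, 0 ≤ Q k n) → dist Q P < ε → F P ≤ F Q) →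
      A = {P}) := by
  classical
  subst hS1 hA hT
  have hsubset : interior dom ⊆ dom := interior_subset
  obtain ⟨hPS1', hPopt⟩ := hPA
  obtain ⟨hPsum, hP01⟩ := hPS1'
  have hP0 : ∀ k n, 0 ≤ P k n := fun k n => by rcases hP01 k n with h | h <;> simp [h]
  have Dnonneg : ∀ z ∈ dom, ∀ y ∈ interior dom, 0 ≤ D z y := by
    intro z hz y hy
    rw [hD]
    have := grad_le' hφ.convexOn (hsubset hy) (hdiff y hy) hz
    linarith
  have Dpos : ∀ z ∈ dom, ∀ y ∈ interior dom, z ≠ y → 0 < D z y := by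
    intro z hz y hy hne
    rw [hD]
    have := grad_lt' hφ (hsubset hy) (hdiff y hy) hz hne
    linarith
  have hfsplit : ∀ Q C, f Q C = ∑ n, ∑ k, Q k n * w n * D (x n) (C k) := by
    intro Q C; rw [hf]; exact Finset.sum_comm
  have massPos : ∀ k, 0 < ∑ n, P k n * w n := by
    intro k
    obtain ⟨n, hn⟩ := hnonempty k
    refine Finset.sum_pos' (fun m _ => mul_nonneg (hP0 k m) (hw m).le) ⟨n, mem_univ n, ?_⟩
    rw [hn, one_mul]; exact hw n
  have hCsum : ∀ k, ∑ n, (P k n * w n) • x n = (∑ n, P k n * w n) • Cstar k := by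
    intro k; rw [hCstar k, smul_inv_smul₀ (massPos k).ne']
  -- F P = f P Cstar
  have hFP : F P = f P Cstar := by
    refine le_antisymm ((hF P).2 ⟨Cstar, hCint, rfl⟩) ?_
    obtain ⟨C₀, hC₀, hEq⟩ := (hF P).1
    rw [hEq, hf, hf]
    refine Finset.sum_le_sum (fun k _ => ?_)
    have hid := mean_identity' φ f' D hD x (fun n => P k n * w n) (∑ n, P k n * w n)
      (massPos k).ne' rfl (Cstar k) (hCstar k) (C₀ k)
    nlinarith [hid, Dnonneg (Cstar k) (hsubset (hCint k)) (C₀ k) (hC₀ k), massPos k]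
  -- key lemma
  have keyLemma : ∀ Q : Fin K → Fin N → ℝ, (∀ k n, 0 ≤ Q k n) → ∀ j : Fin K,
      0 < (∑ n, Q j n * w n) →
      (∑ n, Q j n * w n)⁻¹ • (∑ n, (Q j n * w n) • x n) ≠ Cstar j →
      F Q < f Q Cstar := by
    intro Q hQ0 j hmass hne
    set C' : Fin K → (Fin d → ℝ) := fun k =>
      if h : 0 < ∑ n, Q k n * w n then (∑ n, Q k n * w n)⁻¹ • (∑ n, (Q k n * w n) • x n)
      else Cstar k with hC'
    have hC'mem : ∀ k, C' k ∈ interior dom := by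
      intro k
      rw [hC']
      dsimp only
      split_ifs with h
      · exact mean_mem' hdom.interior x hx _ (fun n => mul_nonneg (hQ0 k n) (hw n).le) h
      · exact hCint k
    have hC'j : C' j = (∑ n, Q j n * w n)⁻¹ • (∑ n, (Q j n * w n) • x n) := by
      rw [hC']; exact dif_pos hmass
    have hkle : ∀ k, (∑ n, Q k n * w n * D (x n) (C' k)) ≤ ∑ n, Q k n * w n * D (x n) (Cstar k) := by
      intro k
      by_cases h : 0 < ∑ n, Q k n * w n
      · have hC'k : C' k = (∑ n, Q k n * w n)⁻¹ • (∑ n, (Q k n * w n) • x n) := by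
          rw [hC']; exact dif_pos h
        have hid := mean_identity' φ f' D hD x (fun n => Q k n * w n) (∑ n, Q k n * w n)
          h.ne' rfl (C' k) hC'k (Cstar k)
        nlinarith [hid, Dnonneg (C' k) (hsubset (hC'mem k)) (Cstar k) (hCint k), h]
      · have hC'k : C' k = Cstar k := by rw [hC']; exact dif_neg h
        rw [hC'k]
    have hjlt : (∑ n, Q j n * w n * D (x n) (C' j)) < ∑ n, Q j n * w n * D (x n) (Cstar j) := by
      have hid := mean_identity' φ f' D hD x (fun n => Q j n * w n) (∑ n, Q j n * w n)
        hmass.ne' rfl (C' j) hC'j (Cstar j)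
      have hDpos : 0 < D (C' j) (Cstar j) := by
        refine Dpos (C' j) (hsubset (hC'mem j)) (Cstar j) (hCint j) ?_
        rw [hC'j]; exact hne
      nlinarith [hid, hDpos, hmass]
    have hlt : f Q C' < f Q Cstar := by
      rw [hf, hf]
      exact Finset.sum_lt_sum (fun k _ => hkle k) ⟨j, mem_univ j, hjlt⟩
    exact lt_of_le_of_lt ((hF Q).2 ⟨C', hC'mem, rfl⟩) hlt
  -- column machinery
  have colOne : ∀ Q : Fin K → Fin N → ℝ,
      ((∀ n, ∑ k, Q k n = 1) ∧ ∀ k n, Q k n = 0 ∨ Q k n = 1) → ∀ n, ∃ k, Q k n = 1 := by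
    intro Q hQ n
    by_contra h
    push_neg at h
    have h0 : ∑ k, Q k n = 0 := Finset.sum_eq_zero fun k _ => (hQ.2 k n).resolve_right (h k)
    rw [hQ.1 n] at h0
    exact one_ne_zero h0
  have colZero : ∀ Q : Fin K → Fin N → ℝ,
      ((∀ n, ∑ k, Q k n = 1) ∧ ∀ k n, Q k n = 0 ∨ Q k n = 1) →
      ∀ (k₀ : Fin K) (n : Fin N), Q k₀ n = 1 → ∀ k, k ≠ k₀ → Q k n = 0 := by
    intro Q hQ k₀ n h1 k hk
    have hsum := hQ.1 n
    have he := Finset.sum_erase_add univ (fun k' => Q k' n) (mem_univ k₀)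
    rw [h1] at he
    have hzero : ∑ k' ∈ univ.erase k₀, Q k' n = 0 := by linarith
    have hnn : ∀ k' ∈ univ.erase k₀, 0 ≤ Q k' n := fun k' _ => by
      rcases hQ.2 k' n with h | h <;> simp [h]
    exact (Finset.sum_eq_zero_iff_of_nonneg hnn).mp hzero k (Finset.mem_erase.mpr ⟨hk, mem_univ k⟩)
  have colVal : ∀ Q : Fin K → Fin N → ℝ,
      ((∀ n, ∑ k, Q k n = 1) ∧ ∀ k n, Q k n = 0 ∨ Q k n = 1) →
      ∀ (k₀ : Fin K) (n : Fin N), Q k₀ n = 1 →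
      (∑ k, Q k n * w n * D (x n) (Cstar k)) = w n * D (x n) (Cstar k₀) := by
    intro Q hQ k₀ n h1
    rw [Finset.sum_eq_single k₀]
    · rw [h1, one_mul]
    · intro k _ hk
      rw [colZero Q hQ k₀ n h1 k hk, zero_mul, zero_mul]
    · intro h; exact absurd (mem_univ k₀) h
  have colOpt : ∀ Q : Fin K → Fin N → ℝ,
      ((∀ n, ∑ k, Q k n = 1) ∧ ∀ k n, Q k n = 0 ∨ Q k n = 1) →
      (∀ Q' ∈ {P : Fin K → Fin N → ℝ |
        (∀ n, ∑ k, P k n = 1) ∧ ∀ k n, P k n = 0 ∨ P k n = 1}, f Q Cstar ≤ f Q' Cstar) →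
      ∀ Q' : Fin K → Fin N → ℝ,
      ((∀ n, ∑ k, Q' k n = 1) ∧ ∀ k n, Q' k n = 0 ∨ Q' k n = 1) →
      ∀ n : Fin N, (∑ k, Q k n * w n * D (x n) (Cstar k)) ≤ ∑ k, Q' k n * w n * D (x n) (Cstar k) := by
    intro Q hQ hopt Q' hQ' n
    have hswapS1 : (fun k m => if m = n then Q' k m else Q k m) ∈ {P : Fin K → Fin N → ℝ |
        (∀ n, ∑ k, P k n = 1) ∧ ∀ k n, P k n = 0 ∨ P k n = 1} := by
      constructor
      · intro m
        by_cases hm : m = n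
        · subst hm; simp only [if_pos rfl]; exact hQ'.1 m
        · simp only [if_neg hm]; exact hQ.1 m
      · intro k m
        by_cases hm : m = n
        · subst hm; simp only [if_pos rfl]; exact hQ'.2 k m
        · simp only [if_neg hm]; exact hQ.2 k m
    have h := hopt _ hswapS1
    rw [hfsplit, hfsplit] at h
    have e3 : (∑ m ∈ univ.erase n, ∑ k, (if m = n then Q' k m else Q k m) * w m * D (x m) (Cstar k))
        = ∑ m ∈ univ.erase n, ∑ k, Q k m * w m * D (x m) (Cstar k) :=
      Finset.sum_congr rfl fun m hm => Finset.sum_congr rfl fun k _ => by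
        rw [if_neg (Finset.mem_erase.mp hm).1]
    have e1 : (∑ m, ∑ k, Q k m * w m * D (x m) (Cstar k))
        = (∑ m ∈ univ.erase n, ∑ k, Q k m * w m * D (x m) (Cstar k))
          + ∑ k, Q k n * w n * D (x n) (Cstar k) :=
      (Finset.sum_erase_add _ _ (mem_univ n)).symm
    have e2 : (∑ m, ∑ k, (if m = n then Q' k m else Q k m) * w m * D (x m) (Cstar k))
        = (∑ m ∈ univ.erase n, ∑ k, Q k m * w m * D (x m) (Cstar k))
          + ∑ k, Q' k n * w n * D (x n) (Cstar k) := by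
      rw [← Finset.sum_erase_add _ _ (mem_univ n)]
      rw [e3]
      congr 1
      exact Finset.sum_congr rfl fun k _ => by rw [if_pos rfl]
    rw [e1, e2] at h
    linarith
  -- mean shift lemma
  have meanNe : ∀ (j : Fin K) (n₁ : Fin N) (c : ℝ), 0 < c → P j n₁ = 0 → x n₁ ≠ Cstar j →
      ∀ b : Fin N → ℝ, (∀ n, n ≠ n₁ → b n = P j n * w n) → b n₁ = c * w n₁ →
      (∑ n, b n)⁻¹ • (∑ n, b n • x n) ≠ Cstar j := by
    intro j n₁ c hc hPj hxne b hb hbn heq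
    have hm := massPos j
    have hsb : ∑ n, b n = (∑ n, P j n * w n) + c * w n₁ := by
      have e1 := Finset.sum_erase_add univ b (mem_univ n₁)
      have e2 := Finset.sum_erase_add univ (fun n => P j n * w n) (mem_univ n₁)
      have e3 : ∑ n ∈ univ.erase n₁, b n = ∑ n ∈ univ.erase n₁, P j n * w n :=
        Finset.sum_congr rfl fun n hn => hb n (Finset.mem_erase.mp hn).1
      rw [hPj, zero_mul] at e2
      rw [hbn] at e1
      linarith [e1, e2, e3]
    have hvb : ∑ n, b n • x n = ((∑ n, P j n * w n) • Cstar j) + (c * w n₁) • x n₁ := by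
      have e1 := Finset.sum_erase_add univ (fun n => b n • x n) (mem_univ n₁)
      have e2 := Finset.sum_erase_add univ (fun n => (P j n * w n) • x n) (mem_univ n₁)
      have e3 : ∑ n ∈ univ.erase n₁, b n • x n = ∑ n ∈ univ.erase n₁, (P j n * w n) • x n :=
        Finset.sum_congr rfl fun n hn => by rw [hb n (Finset.mem_erase.mp hn).1]
      rw [hPj, zero_mul, zero_smul, add_zero] at e2
      rw [← e1, e3, e2, hbn, hCsum j]
    have hsbpos : 0 < ∑ n, b n := by
      rw [hsb]; exact add_pos hm (mul_pos hc (hw n₁))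
    have h2 : ∑ n, b n • x n = (∑ n, b n) • Cstar j := by
      rw [← heq, smul_inv_smul₀ hsbpos.ne']
    rw [hvb, hsb, add_smul] at h2
    have h3 : (c * w n₁) • x n₁ = (c * w n₁) • Cstar j := by
      have := add_left_cancel h2
      exact this
    exact hxne (smul_right_injective _ (ne_of_gt (mul_pos hc (hw n₁))) h3)
  -- analyze a member of A ∩ T
  have analyzeT : ∀ P'' : Fin K → Fin N → ℝ,
      P'' ∈ ({Q ∈ {P : Fin K → Fin N → ℝ |
          (∀ n, ∑ k, P k n = 1) ∧ ∀ k n, P k n = 0 ∨ P k n = 1} |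
        ∀ Q' ∈ {P : Fin K → Fin N → ℝ |
          (∀ n, ∑ k, P k n = 1) ∧ ∀ k n, P k n = 0 ∨ P k n = 1}, f Q Cstar ≤ f Q' Cstar} ∩
        {Q ∈ {P : Fin K → Fin N → ℝ |
          (∀ n, ∑ k, P k n = 1) ∧ ∀ k n, P k n = 0 ∨ P k n = 1} | ∃ n₀ : Fin N,
          (∀ n, n ≠ n₀ → ∀ k, Q k n = P k n) ∧ ∃ k, Q k n₀ ≠ P k n₀}) →
      ∃ (n₁ : Fin N) (j : Fin K), P'' j n₁ = 1 ∧ P j n₁ = 0 ∧ x n₁ ≠ Cstar j ∧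
        (∀ n, n ≠ n₁ → ∀ k, P'' k n = P k n) := by
    intro P'' hP''
    obtain ⟨⟨hS1'', hopt''⟩, -, n₁, hoff, k₂, hk₂⟩ := hP''
    obtain ⟨j, hj⟩ := colOne P'' hS1'' n₁
    obtain ⟨i, hi⟩ := colOne P ⟨hPsum, hP01⟩ n₁
    have hij : i ≠ j := by
      rintro rfl
      apply hk₂
      by_cases hk : k₂ = i
      · subst hk; rw [hj, hi]
      · rw [colZero P'' hS1'' i n₁ hj k₂ hk, colZero P ⟨hPsum, hP01⟩ i n₁ hi k₂ hk]
    have hPj : P j n₁ = 0 := colZero P ⟨hPsum, hP01⟩ i n₁ hi j (Ne.symm hij)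
    have hxne : x n₁ ≠ Cstar j := by
      intro hxc
      have hcols : (∑ k, P'' k n₁ * w n₁ * D (x n₁) (Cstar k))
          = ∑ k, P k n₁ * w n₁ * D (x n₁) (Cstar k) :=
        le_antisymm (colOpt P'' hS1'' hopt'' P ⟨hPsum, hP01⟩ n₁)
          (colOpt P ⟨hPsum, hP01⟩ hPopt P'' hS1'' n₁)
      rw [colVal P'' hS1'' j n₁ hj, colVal P ⟨hPsum, hP01⟩ i n₁ hi] at hcols
      have hDj : D (x n₁) (Cstar j) = 0 := by
        rw [hxc, hD]; simp
      have hDi : D (x n₁) (Cstar i) = 0 := by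
        have := mul_left_cancel₀ (hw n₁).ne' hcols
        rw [hDj] at this
        exact this.symm
      have hxi : x n₁ = Cstar i := by
        by_contra hne
        exact absurd hDi (ne_of_gt (Dpos _ (hsubset (hx n₁)) _ (hCint i) hne))
      exact hij (hdistinct (hxi.symm.trans hxc))
    exact ⟨n₁, j, hj, hPj, hxne, hoff⟩
  -- build an element of A ∩ T from any R ∈ A with R ≠ P
  have buildP' : ∀ R : Fin K → Fin N → ℝ,
      ((∀ n, ∑ k, R k n = 1) ∧ ∀ k n, R k n = 0 ∨ R k n = 1) →
      (∀ Q' ∈ {P : Fin K → Fin N → ℝ |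
        (∀ n, ∑ k, P k n = 1) ∧ ∀ k n, P k n = 0 ∨ P k n = 1}, f R Cstar ≤ f Q' Cstar) →
      R ≠ P →
      ∃ P' : Fin K → Fin N → ℝ,
        (((∀ n, ∑ k, P' k n = 1) ∧ ∀ k n, P' k n = 0 ∨ P' k n = 1) ∧
          ∀ Q' ∈ {P : Fin K → Fin N → ℝ |
            (∀ n, ∑ k, P k n = 1) ∧ ∀ k n, P k n = 0 ∨ P k n = 1}, f P' Cstar ≤ f Q' Cstar) ∧
        (((∀ n, ∑ k, P' k n = 1) ∧ ∀ k n, P' k n = 0 ∨ P' k n = 1) ∧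
          ∃ n₀ : Fin N, (∀ n, n ≠ n₀ → ∀ k, P' k n = P k n) ∧ ∃ k, P' k n₀ ≠ P k n₀) := by
    intro R hRS1 hRopt hRP
    have hdiffcol : ∃ n, ∃ k, R k n ≠ P k n := by
      by_contra h
      push_neg at h
      exact hRP (funext fun k => funext fun n => h n k)
    obtain ⟨n₀, k₁, hk₁⟩ := hdiffcol
    have hS1' : (∀ n, (∑ k, if n = n₀ then R k n else P k n) = 1) ∧
        ∀ k n, (if n = n₀ then R k n else P k n) = 0 ∨ (if n = n₀ then R k n else P k n) = 1 := by
      constructor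
      · intro n
        by_cases hn : n = n₀
        · subst hn; simp only [if_pos rfl]; exact hRS1.1 n
        · simp only [if_neg hn]; exact hPsum n
      · intro k n
        by_cases hn : n = n₀
        · subst hn; simp only [if_pos rfl]; exact hRS1.2 k n
        · simp only [if_neg hn]; exact hP01 k n
    refine ⟨fun k n => if n = n₀ then R k n else P k n, ⟨hS1', ?_⟩, hS1', n₀, ?_, k₁, ?_⟩
    · intro Q' hQ'
      rw [hfsplit, hfsplit]
      refine Finset.sum_le_sum fun n _ => ?_
      by_cases hn : n = n₀
      · subst hn
        have he : (∑ k, (if n = n then R k n else P k n) * w n * D (x n) (Cstar k))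
            = ∑ k, R k n * w n * D (x n) (Cstar k) :=
          Finset.sum_congr rfl fun k _ => by rw [if_pos rfl]
        rw [he]
        exact colOpt R hRS1 hRopt Q' hQ' n
      · have he : (∑ k, (if n = n₀ then R k n else P k n) * w n * D (x n) (Cstar k))
            = ∑ k, P k n * w n * D (x n) (Cstar k) :=
          Finset.sum_congr rfl fun k _ => by rw [if_neg hn]
        rw [he]
        exact colOpt P ⟨hPsum, hP01⟩ hPopt Q' hQ' n
    · intro n hn k
      exact if_neg hn
    · show (if n₀ = n₀ then R k₁ n₀ else P k₁ n₀) ≠ P k₁ n₀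
      rw [if_pos rfl]
      exact hk₁
  refine ⟨?_, ?_⟩
  · -- Part 1
    intro hAnt
    obtain ⟨a, ha, b, hb, hab⟩ := hAnt
    have hex : ∃ R : Fin K → Fin N → ℝ,
        (((∀ n, ∑ k, R k n = 1) ∧ ∀ k n, R k n = 0 ∨ R k n = 1) ∧
          ∀ Q' ∈ {P : Fin K → Fin N → ℝ |
            (∀ n, ∑ k, P k n = 1) ∧ ∀ k n, P k n = 0 ∨ P k n = 1},
            f R Cstar ≤ f Q' Cstar) ∧ R ≠ P := by
      rcases eq_or_ne a P with rfl | hne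
      · exact ⟨b, hb, Ne.symm hab⟩
      · exact ⟨a, ha, hne⟩
    obtain ⟨R, hRA, hRne⟩ := hex
    obtain ⟨P', hP'A, hP'T⟩ := buildP' R hRA.1 hRA.2 hRne
    constructor
    · exact ⟨P', hP'A, hP'T⟩
    · intro P'' hP''
      obtain ⟨n₁, j, hj, hPj, hxne, hoff⟩ := analyzeT P'' hP''
      have hP''S1 : (∀ n, ∑ k, P'' k n = 1) ∧ ∀ k n, P'' k n = 0 ∨ P'' k n = 1 := hP''.1.1
      have hP''opt : ∀ Q' ∈ {P : Fin K → Fin N → ℝ |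
          (∀ n, ∑ k, P k n = 1) ∧ ∀ k n, P k n = 0 ∨ P k n = 1},
          f P'' Cstar ≤ f Q' Cstar := hP''.1.2
      have hP''0 : ∀ k n, 0 ≤ P'' k n := fun k n => by
        rcases hP''S1.2 k n with h | h <;> simp [h]
      have hmass : 0 < ∑ n, P'' j n * w n := by
        refine Finset.sum_pos' (fun m _ => mul_nonneg (hP''0 j m) (hw m).le)
          ⟨n₁, mem_univ n₁, ?_⟩
        rw [hj, one_mul]; exact hw n₁
      have hμne := meanNe j n₁ 1 one_pos hPj hxne (fun n => P'' j n * w n)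
        (fun n hn => by show P'' j n * w n = P j n * w n; rw [hoff n hn j])
        (by show P'' j n₁ * w n₁ = 1 * w n₁; rw [hj])
      have hkey := keyLemma P'' hP''0 j hmass hμne
      have hfeq : f P'' Cstar = f P Cstar :=
        le_antisymm (hP''opt P ⟨hPsum, hP01⟩) (hPopt P'' hP''S1)
      rw [hFP]
      calc F P'' < f P'' Cstar := hkey
        _ = f P Cstar := hfeq
  · -- Part 2
    rintro ⟨ε, hε, hloc⟩
    apply Set.eq_singleton_iff_unique_mem.mpr
    refine ⟨⟨⟨hPsum, hP01⟩, hPopt⟩, ?_⟩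
    intro Q hQA
    by_contra hQP
    obtain ⟨P', hP'A, hP'T⟩ := buildP' Q hQA.1 hQA.2 hQP
    obtain ⟨n₁, j, hj, hPj, hxne, hoff⟩ := analyzeT P' ⟨hP'A, hP'T⟩
    obtain ⟨hP'S1, hP'opt⟩ := hP'A
    have hP'0 : ∀ k n, 0 ≤ P' k n := fun k n => by
      rcases hP'S1.2 k n with h | h <;> simp [h]
    have hfeq : f P' Cstar = f P Cstar :=
      le_antisymm (hP'opt P ⟨hPsum, hP01⟩) (hPopt P' hP'S1)
    set R0 : ℝ := ‖P' - P‖ with hR0def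
    have hR0 : 0 ≤ R0 := norm_nonneg _
    set t : ℝ := min 1 (ε / (R0 + 1)) with htdef
    have ht0 : 0 < t := lt_min one_pos (div_pos hε (by linarith))
    have ht1 : t ≤ 1 := min_le_left _ _
    set Qt : Fin K → Fin N → ℝ := fun k n => (1 - t) * P k n + t * P' k n with hQt
    have hQtval : ∀ k n, Qt k n = (1 - t) * P k n + t * P' k n := fun k n => rfl
    have hQtsum : ∀ n, ∑ k, Qt k n = 1 := by
      intro n
      simp only [hQtval]
      rw [Finset.sum_add_distrib, ← Finset.mul_sum, ← Finset.mul_sum, hPsum n, hP'S1.1 n]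
      ring
    have hQt0 : ∀ k n, 0 ≤ Qt k n := by
      intro k n
      rw [hQtval]
      exact add_nonneg (mul_nonneg (by linarith) (hP0 k n)) (mul_nonneg ht0.le (hP'0 k n))
    have hdist : dist Qt P < ε := by
      have hsub : Qt - P = t • (P' - P) := by
        funext k n
        simp only [Pi.sub_apply, Pi.smul_apply, smul_eq_mul, hQtval]
        ring
      rw [dist_eq_norm, hsub, norm_smul, Real.norm_eq_abs, abs_of_pos ht0, ← hR0def]
      have h1 : t ≤ ε / (R0 + 1) := min_le_right _ _
      have h2 : t * R0 ≤ (ε / (R0 + 1)) * R0 := mul_le_mul_of_nonneg_right h1 hR0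
      have h3 : (ε / (R0 + 1)) * R0 < ε := by
        rw [div_mul_eq_mul_div, div_lt_iff₀ (by linarith)]
        nlinarith
      linarith
    have hFle := hloc Qt ⟨hQtsum, hQt0⟩ hdist
    have hQtn₁ : Qt j n₁ = t := by
      rw [hQtval, hPj, hj]; ring
    have hmass : 0 < ∑ n, Qt j n * w n := by
      refine Finset.sum_pos' (fun m _ => mul_nonneg (hQt0 j m) (hw m).le)
        ⟨n₁, mem_univ n₁, ?_⟩
      rw [hQtn₁]
      exact mul_pos ht0 (hw n₁)
    have hμne := meanNe j n₁ t ht0 hPj hxne (fun n => Qt j n * w n)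
      (fun n hn => by show Qt j n * w n = P j n * w n; rw [hQtval, hoff n hn j]; ring)
      (by show Qt j n₁ * w n₁ = t * w n₁; rw [hQtn₁])
    have hkey := keyLemma Qt hQt0 j hmass hμne
    have hfQt : f Qt Cstar = f P Cstar := by
      have hlin : f Qt Cstar = (1 - t) * f P Cstar + t * f P' Cstar := by
        rw [hf, hf, hf, Finset.mul_sum, Finset.mul_sum, ← Finset.sum_add_distrib]
        refine Finset.sum_congr rfl fun k _ => ?_
        rw [Finset.mul_sum, Finset.mul_sum, ← Finset.sum_add_distrib]
        refine Finset.sum_congr rfl fun n _ => ?_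
        rw [hQtval]; ring
      rw [hlin, hfeq]; ring
    rw [hFP] at hFle
    rw [hfQt] at hkey
    linarith
end

section
/- If (P*, C*) is a partial optimal solution of the relaxed K-means problem (f(P*, C*) ≤ f(P, C*) for all P ∈ S_2, with C* optimal for P*), all clusters of P* are non-empty, and the set A(C*) of minimizing 0/1 assignments for centers C* is a singleton, then P* is a local minimizer of F on S_2 (C-local). -/
open Finset Filter

private lemma slope_tendsto_aux {d : ℕ} {φ : (Fin d → ℝ) → ℝ} {L : (Fin d → ℝ) →L[ℝ] ℝ}
    {b : Fin d → ℝ} (h : HasFDerivAt φ L b) (v : Fin d → ℝ) :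
    Tendsto (fun t : ℝ => (φ (b + t • v) - φ b) / t) (nhdsWithin 0 {(0:ℝ)}ᶜ) (nhds (L v)) := by
  have h1 : HasDerivAt (fun t : ℝ => b + t • v) v 0 := by
    simpa using ((hasDerivAt_id (0:ℝ)).smul_const v).const_add b
  have hg : HasDerivAt (fun t : ℝ => φ (b + t • v)) (L v) 0 := by
    have hb : b + (0:ℝ) • v = b := by simp
    have := HasFDerivAt.comp_hasDerivAt (0:ℝ) (by rw [hb]; exact h) h1
    exact this
  have h2 := hasDerivAt_iff_tendsto_slope.1 hg
  refine h2.congr ?_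
  intro t
  simp [slope_def_field]

private lemma grad_le_aux {d : ℕ} {dom : Set (Fin d → ℝ)} {φ : (Fin d → ℝ) → ℝ}
    (hφ : ConvexOn ℝ dom φ) {L : (Fin d → ℝ) →L[ℝ] ℝ} {a : Fin d → ℝ}
    (hL : HasFDerivAt φ L a) (ha : a ∈ dom) {z : Fin d → ℝ} (hz : z ∈ dom) :
    L (z - a) ≤ φ z - φ a := by
  have hs := slope_tendsto_aux hL (z - a)
  have hs' : Tendsto (fun t : ℝ => (φ (a + t • (z - a)) - φ a) / t)
      (nhdsWithin 0 (Set.Ioi 0)) (nhds (L (z - a))) :=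
    hs.mono_left (nhdsWithin_mono _ (fun t ht => by
      simp only [Set.mem_compl_iff, Set.mem_singleton_iff]
      exact ne_of_gt ht))
  refine le_of_tendsto hs' ?_
  filter_upwards [self_mem_nhdsWithin,
    eventually_nhdsWithin_of_eventually_nhds (eventually_lt_nhds (by norm_num : (0:ℝ) < 1))]
    with t ht0 ht1
  have ht0 : (0:ℝ) < t := ht0
  have hmem : a + t • (z - a) = (1 - t) • a + t • z := by module
  have hconv := hφ.2 ha hz (by linarith : (0:ℝ) ≤ 1 - t) (le_of_lt ht0) (by ring)
  simp only [smul_eq_mul] at hconv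
  rw [hmem]
  rw [div_le_iff₀ ht0]
  calc φ ((1 - t) • a + t • z) - φ a ≤ (1 - t) * φ a + t * φ z - φ a := by linarith
    _ = (φ z - φ a) * t := by ring

private lemma fprime_contAt {d : ℕ} {dom : Set (Fin d → ℝ)}
    {φ : (Fin d → ℝ) → ℝ} (hφ : ConvexOn ℝ dom φ)
    {f' : (Fin d → ℝ) → (Fin d → ℝ) →L[ℝ] ℝ}
    (hdiff : ∀ y ∈ interior dom, HasFDerivAt φ (f' y) y)
    {x0 : Fin d → ℝ} (hx0 : x0 ∈ dom) {b : Fin d → ℝ} (hb : b ∈ interior dom) :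
    ContinuousAt (fun y => (f' y) (x0 - y)) b := by
  have φcont : ∀ y ∈ interior dom, ContinuousAt φ y := fun y hy => (hdiff y hy).continuousAt
  set L : ℝ := (f' b) (x0 - b) with hLdef
  rw [ContinuousAt, Metric.tendsto_nhds]
  intro ε hε
  have hmemev : ∀ v : Fin d → ℝ, ∀ᶠ t : ℝ in nhds 0, b + t • v ∈ interior dom := by
    intro v
    have hc : Continuous fun t : ℝ => b + t • v :=
      continuous_const.add (continuous_id.smul continuous_const)
    have h0 : b + (0:ℝ) • v = b := by simp
    exact (hc.continuousAt (x := (0:ℝ))).eventually_mem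
      (by rw [h0]; exact isOpen_interior.mem_nhds hb)
  have hE1 : ∀ᶠ t : ℝ in nhdsWithin 0 {(0:ℝ)}ᶜ,
      |(φ (b + t • (x0 - b)) - φ b) / t - L| < ε/3 := by
    have := Metric.tendsto_nhds.1 (slope_tendsto_aux (hdiff b hb) (x0 - b)) (ε/3) (by linarith)
    simpa only [Real.dist_eq] using this
  have hE2 : ∀ᶠ t : ℝ in nhdsWithin 0 {(0:ℝ)}ᶜ,
      |(φ (b + t • (b - x0)) - φ b) / t - (f' b) (b - x0)| < ε/3 := by
    have := Metric.tendsto_nhds.1 (slope_tendsto_aux (hdiff b hb) (b - x0)) (ε/3) (by linarith)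
    simpa only [Real.dist_eq] using this
  have hsub : nhdsWithin (0:ℝ) (Set.Ioi 0) ≤ nhdsWithin 0 {(0:ℝ)}ᶜ :=
    nhdsWithin_mono _ (fun t ht => ne_of_gt ht)
  have hall := (((hE1.and hE2).filter_mono hsub).and
      (((hmemev (x0 - b)).and (hmemev (b - x0))).filter_mono nhdsWithin_le_nhds)).and
      self_mem_nhdsWithin
  obtain ⟨s, ⟨⟨hsl1, hsl2⟩, hm1, hm2⟩, hs0⟩ := hall.exists
  have hs0 : (0:ℝ) < s := hs0
  -- the slope bounds at b
  have hub : (φ (b + s • (x0 - b)) - φ b) / s < L + ε/3 := by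
    have := abs_lt.1 hsl1; linarith [this.2]
  have hlb : L - ε/3 < (φ b - φ (b + s • (b - x0))) / s := by
    have h1 := abs_lt.1 hsl2
    have hneg : (f' b) (b - x0) = -L := by
      rw [hLdef, ← map_neg]; congr 1; abel
    rw [hneg] at h1
    have : (φ b - φ (b + s • (b - x0))) / s = -((φ (b + s • (b - x0)) - φ b) / s) := by ring
    rw [this]; linarith [h1.2]
  -- now the neighborhood in y
  have hY1 : ∀ᶠ y in nhds b, y ∈ interior dom := isOpen_interior.eventually_mem hb
  have hcaff1 : Continuous fun y : Fin d → ℝ => y + s • (x0 - y) :=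
    continuous_id.add ((continuous_const.sub continuous_id).const_smul s)
  have hcaff2 : Continuous fun y : Fin d → ℝ => y + s • (y - x0) :=
    continuous_id.add ((continuous_id.sub continuous_const).const_smul s)
  have haff1b : b + s • (x0 - b) = (fun y : Fin d → ℝ => y + s • (x0 - y)) b := rfl
  have haff2b : b + s • (b - x0) = (fun y : Fin d → ℝ => y + s • (y - x0)) b := rfl
  have hY2 : ∀ᶠ y in nhds b, y + s • (x0 - y) ∈ interior dom :=
    (hcaff1.continuousAt (x := b)).eventually_mem (isOpen_interior.mem_nhds hm1)
  have hY3 : ∀ᶠ y in nhds b, y + s • (y - x0) ∈ interior dom :=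
    (hcaff2.continuousAt (x := b)).eventually_mem (isOpen_interior.mem_nhds hm2)
  -- continuity of the upper/lower slope bounds in y
  have hup : ContinuousAt (fun y => (φ (y + s • (x0 - y)) - φ y) / s) b := by
    have h1 := ContinuousAt.comp (f := fun y : Fin d → ℝ => y + s • (x0 - y))
      (φcont _ hm1) hcaff1.continuousAt
    exact (h1.sub (φcont b hb)).div_const s
  have hdn : ContinuousAt (fun y => (φ y - φ (y + s • (y - x0))) / s) b := by
    have h1 := ContinuousAt.comp (f := fun y : Fin d → ℝ => y + s • (y - x0))
      (φcont _ hm2) hcaff2.continuousAt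
    exact ((φcont b hb).sub h1).div_const s
  have hY4 : ∀ᶠ y in nhds b, (φ (y + s • (x0 - y)) - φ y) / s < L + ε/3 :=
    hup.eventually_lt_const hub
  have hY5 : ∀ᶠ y in nhds b, L - ε/3 < (φ y - φ (y + s • (y - x0))) / s :=
    hdn.eventually_const_lt hlb
  filter_upwards [hY1, hY2, hY3, hY4, hY5] with y hy1 hy2 hy3 hy4 hy5
  have hupper : (f' y) (x0 - y) ≤ (φ (y + s • (x0 - y)) - φ y) / s := by
    have := grad_le_aux hφ (hdiff y hy1) (interior_subset hy1) (interior_subset hy2)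
    have heq : y + s • (x0 - y) - y = s • (x0 - y) := by abel
    rw [heq] at this
    rw [map_smul, smul_eq_mul] at this
    rw [le_div_iff₀ hs0]; linarith [this]
  have hlower : (φ y - φ (y + s • (y - x0))) / s ≤ (f' y) (x0 - y) := by
    have := grad_le_aux hφ (hdiff y hy1) (interior_subset hy1) (interior_subset hy3)
    have heq : y + s • (y - x0) - y = s • (y - x0) := by abel
    rw [heq] at this
    rw [map_smul, smul_eq_mul] at this
    have hneg : (f' y) (y - x0) = -((f' y) (x0 - y)) := by
      rw [show y - x0 = -(x0 - y) by abel, map_neg]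
    rw [hneg] at this
    rw [div_le_iff₀ hs0]; linarith [this]
  rw [Real.dist_eq, abs_sub_lt_iff]
  constructor <;> nlinarith [hupper, hlower, hy4, hy5]

/-- If `(P*, C*)` is a partial optimal solution of the relaxed K-means
problem (i.e. `f P* C* ≤ f P C*` for all `P ∈ S2`, with `C*` optimal for `P*`), all
clusters of `P*` are non-empty, and the set `A(C*)` of minimizing 0/1 assignments for
the centers `C*` is a singleton, then `P*` is a local minimizer of `F` on `S2`
(C-local). -/
theorem partial_optimal_singleton_cLocal {d K N : ℕ}
    (dom : Set (Fin d → ℝ)) (hdom : Convex ℝ dom)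
    (φ : (Fin d → ℝ) → ℝ) (hφ : StrictConvexOn ℝ dom φ)
    (f' : (Fin d → ℝ) → (Fin d → ℝ) →L[ℝ] ℝ)
    (hdiff : ∀ y ∈ interior dom, HasFDerivAt φ (f' y) y)
    (D : (Fin d → ℝ) → (Fin d → ℝ) → ℝ)
    (hD : ∀ x y, D x y = φ x - φ y - f' y (x - y))
    (x : Fin N → (Fin d → ℝ)) (hx : ∀ n, x n ∈ interior dom)
    (w : Fin N → ℝ) (hw : ∀ n, 0 < w n)
    (f : (Fin K → Fin N → ℝ) → (Fin K → (Fin d → ℝ)) → ℝ)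
    (hf : ∀ P C, f P C = ∑ k, ∑ n, P k n * w n * D (x n) (C k))
    (F : (Fin K → Fin N → ℝ) → ℝ)
    (hF : ∀ P, IsLeast
      {v | ∃ C : Fin K → (Fin d → ℝ), (∀ k, C k ∈ interior dom) ∧ v = f P C} (F P))
    (S2 S1 : Set (Fin K → Fin N → ℝ))
    (hS2 : S2 = {P | (∀ n, ∑ k, P k n = 1) ∧ ∀ k n, 0 ≤ P k n})
    (hS1 : S1 = {P ∈ S2 | ∀ k n, P k n = 0 ∨ P k n = 1})
    (Pstar : Fin K → Fin N → ℝ) (hPstar : Pstar ∈ S1)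
    (hnonempty : ∀ k, 0 < ∑ n, Pstar k n * w n)
    (Cstar : Fin K → (Fin d → ℝ))
    (hCstar : ∀ k, Cstar k = (∑ n, Pstar k n * w n)⁻¹ • ∑ n, (Pstar k n * w n) • x n)
    (hCint : ∀ k, Cstar k ∈ interior dom)
    (hpartial : ∀ P ∈ S2, f Pstar Cstar ≤ f P Cstar)
    (hCopt : f Pstar Cstar = F Pstar)
    (A : Set (Fin K → Fin N → ℝ))
    (hA : A = {Q ∈ S1 | ∀ Q' ∈ S1, f Q Cstar ≤ f Q' Cstar})
    (hAsingle : ∃ Q, A = {Q}) :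
    ∃ ε > 0, ∀ P ∈ S2, dist P Pstar < ε → F Pstar ≤ F P := by
  classical
  have hφc : ConvexOn ℝ dom φ := hφ.convexOn
  have hPstar' := hPstar
  rw [hS1] at hPstar'
  obtain ⟨hPS2, h01⟩ := hPstar'
  have hPS2' := hPS2
  rw [hS2] at hPS2'
  obtain ⟨hsum1, hnn⟩ := hPS2'
  have hfswap : ∀ R C, f R C = ∑ n, ∑ k, R k n * w n * D (x n) (C k) := fun R C => by
    rw [hf]; exact Finset.sum_comm
  -- the assignment function
  have hex : ∀ n, ∃ k, Pstar k n = 1 := by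
    intro n
    by_contra h
    push_neg at h
    have hz : ∀ k, Pstar k n = 0 := fun k => (h01 k n).resolve_right (h k)
    have h1 := hsum1 n
    rw [Finset.sum_eq_zero (fun k _ => hz k)] at h1
    norm_num at h1
  choose kf hkf using hex
  have hPentry : ∀ k n, Pstar k n = if k = kf n then 1 else 0 := by
    intro k n
    by_cases hk : k = kf n
    · rw [hk, if_pos rfl]; exact hkf n
    · rw [if_neg hk]
      by_contra hne
      have h1 : Pstar k n = 1 := (h01 k n).resolve_left hne
      have hkfmem : kf n ∈ Finset.univ.erase k :=
        Finset.mem_erase.2 ⟨fun h => hk h.symm, Finset.mem_univ _⟩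
      have h2 : (1:ℝ) ≤ ∑ k' ∈ Finset.univ.erase k, Pstar k' n := by
        have := Finset.single_le_sum (f := fun k' => Pstar k' n)
          (fun i _ => hnn i n) hkfmem
        simpa [hkf n] using this
      have h3 : ∑ k' ∈ Finset.univ.erase k, Pstar k' n + Pstar k n = ∑ k', Pstar k' n :=
        Finset.sum_erase_add _ _ (Finset.mem_univ k)
      rw [hsum1 n, h1] at h3
      linarith
  -- A = {Pstar}
  have hPA : Pstar ∈ A := by
    rw [hA]
    exact ⟨hPstar, fun Q' hQ' => hpartial Q' (by rw [hS1] at hQ'; exact hQ'.1)⟩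
  have hAeq : A = {Pstar} := by
    obtain ⟨Q, hQ⟩ := hAsingle
    rw [hQ] at hPA ⊢
    rw [Set.mem_singleton_iff] at hPA
    rw [hPA]
  -- strict separation gap
  have hgap : ∀ n k, k ≠ kf n → D (x n) (Cstar (kf n)) < D (x n) (Cstar k) := by
    intro n k hkne
    set Q : Fin K → Fin N → ℝ :=
      fun k' n' => if n' = n then (if k' = k then 1 else 0) else Pstar k' n' with hQdef
    have hQcoln : ∀ k', Q k' n = if k' = k then 1 else 0 := fun k' => by
      simp only [hQdef, if_pos rfl]
    have hQcol : ∀ k' n', n' ≠ n → Q k' n' = Pstar k' n' := fun k' n' hne => by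
      simp only [hQdef, if_neg hne]
    have hQS1 : Q ∈ S1 := by
      rw [hS1]
      refine ⟨?_, ?_⟩
      · rw [hS2]
        constructor
        · intro n'
          by_cases hn : n' = n
          · subst hn
            rw [Finset.sum_congr rfl fun k' _ => hQcoln k']
            simp
          · rw [Finset.sum_congr rfl fun k' _ => hQcol k' n' hn]
            exact hsum1 n'
        · intro k' n'
          by_cases hn : n' = n
          · subst hn; rw [hQcoln]; split <;> norm_num
          · rw [hQcol k' n' hn]; exact hnn k' n'
      · intro k' n'
        by_cases hn : n' = n
        · subst hn; rw [hQcoln]; split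
          · right; rfl
          · left; rfl
        · rw [hQcol k' n' hn]; exact h01 k' n'
    have hQne : Q ≠ Pstar := by
      intro h
      have h0 : Q (kf n) n = 0 := by rw [hQcoln, if_neg (Ne.symm hkne)]
      rw [h, hkf n] at h0
      norm_num at h0
    have hQnotA : Q ∉ A := by rw [hAeq]; simpa using hQne
    rw [hA] at hQnotA
    have hmin : ¬ (∀ Q' ∈ S1, f Q Cstar ≤ f Q' Cstar) := fun hmin => hQnotA ⟨hQS1, hmin⟩
    push_neg at hmin
    obtain ⟨Q', hQ'S1, hQ'lt⟩ := hmin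
    have hQ'S2 : Q' ∈ S2 := by rw [hS1] at hQ'S1; exact hQ'S1.1
    have hlt : f Pstar Cstar < f Q Cstar := lt_of_le_of_lt (hpartial Q' hQ'S2) hQ'lt
    have hcol : f Q Cstar - f Pstar Cstar
        = w n * D (x n) (Cstar k) - w n * D (x n) (Cstar (kf n)) := by
      rw [hfswap, hfswap, ← Finset.sum_sub_distrib]
      rw [Finset.sum_eq_single_of_mem n (Finset.mem_univ n) (fun n' _ hne => by
        rw [Finset.sum_congr rfl fun k' _ => by rw [hQcol k' n' hne]]
        exact sub_self _)]
      have e1 : ∑ k', Q k' n * w n * D (x n) (Cstar k') = w n * D (x n) (Cstar k) := by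
        rw [Finset.sum_eq_single k
          (fun k' _ hne => by rw [hQcoln, if_neg hne]; ring)
          (fun h => absurd (Finset.mem_univ _) h)]
        rw [hQcoln, if_pos rfl, one_mul]
      have e2 : ∑ k', Pstar k' n * w n * D (x n) (Cstar k')
          = w n * D (x n) (Cstar (kf n)) := by
        rw [Finset.sum_eq_single (kf n)
          (fun k' _ hne => by rw [hPentry k' n, if_neg hne]; ring)
          (fun h => absurd (Finset.mem_univ _) h)]
        rw [hkf n, one_mul]
      rw [e1, e2]
    have h2 : w n * D (x n) (Cstar (kf n)) < w n * D (x n) (Cstar k) := by linarith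
    exact lt_of_mul_lt_mul_left h2 (hw n).le
  -- the center map
  set cmap : (Fin K → Fin N → ℝ) → Fin K → Fin d → ℝ :=
    fun P k => (∑ n, P k n * w n)⁻¹ • ∑ n, (P k n * w n) • x n with hcmap
  have hcmapP : cmap Pstar = Cstar := funext fun k => (hCstar k).symm
  have hmem_int : ∀ (P : Fin K → Fin N → ℝ), (∀ k n, 0 ≤ P k n) →
      ∀ k, 0 < ∑ n, P k n * w n → cmap P k ∈ interior dom := by
    intro P hPnn k hs
    have h1 : cmap P k = ∑ n, ((∑ n', P k n' * w n')⁻¹ * (P k n * w n)) • x n := by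
      simp only [hcmap, Finset.smul_sum, smul_smul]
    rw [h1]
    exact (hdom.interior).sum_mem
      (fun n _ => mul_nonneg (inv_nonneg.2 hs.le) (mul_nonneg (hPnn k n) (hw n).le))
      (by rw [← Finset.mul_sum]; exact inv_mul_cancel₀ (ne_of_gt hs))
      (fun n _ => hx n)
  have hden_cont : ∀ k, Continuous fun P : Fin K → Fin N → ℝ => ∑ n, P k n * w n :=
    fun k => continuous_finset_sum _ fun n _ =>
      (continuous_apply_apply k n).mul continuous_const
  have hcmap_cont : ∀ k, ContinuousAt (fun P => cmap P k) Pstar := by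
    intro k
    have hnum : Continuous fun P : Fin K → Fin N → ℝ => ∑ n, (P k n * w n) • x n :=
      continuous_finset_sum _ fun n _ =>
        ((continuous_apply_apply k n).mul continuous_const).smul
          continuous_const
    exact (((hden_cont k).continuousAt).inv₀ (ne_of_gt (hnonempty k))).smul
      hnum.continuousAt
  have hDcont : ∀ n k, ContinuousAt (fun P => D (x n) (cmap P k)) Pstar := by
    intro n k
    have hDy : ContinuousAt (fun y => D (x n) y) (cmap Pstar k) := by
      have hfun : (fun y => D (x n) y) = fun y => φ (x n) - φ y - (f' y) (x n - y) :=
        funext fun y => hD (x n) y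
      rw [hfun, hcmapP]
      exact (continuousAt_const.sub (hdiff _ (hCint k)).continuousAt).sub
        (fprime_contAt hφc hdiff (interior_subset (hx n)) (hCint k))
    exact ContinuousAt.comp (f := fun P => cmap P k) hDy (hcmap_cont k)
  -- the good neighbourhood
  have hEv : ∀ᶠ P in nhds Pstar, (∀ k, 0 < ∑ n, P k n * w n) ∧
      ∀ n k, D (x n) (cmap P (kf n)) ≤ D (x n) (cmap P k) := by
    have h1 : ∀ᶠ P in nhds Pstar, ∀ k, 0 < ∑ n, P k n * w n := by
      rw [Filter.eventually_all]
      intro k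
      exact ((hden_cont k).continuousAt).eventually_const_lt (hnonempty k)
    have h2 : ∀ᶠ P in nhds Pstar, ∀ n k, D (x n) (cmap P (kf n)) ≤ D (x n) (cmap P k) := by
      rw [Filter.eventually_all]
      intro n
      rw [Filter.eventually_all]
      intro k
      by_cases hk : k = kf n
      · subst hk; exact Filter.Eventually.of_forall (fun P => le_refl _)
      · have hc : ContinuousAt
            (fun P => D (x n) (cmap P k) - D (x n) (cmap P (kf n))) Pstar :=
          (hDcont n k).sub (hDcont n (kf n))
        have hval : (0:ℝ) < D (x n) (cmap Pstar k) - D (x n) (cmap Pstar (kf n)) := by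
          rw [hcmapP]
          exact sub_pos.2 (hgap n k hk)
        filter_upwards [hc.eventually_const_lt hval] with P hP
        linarith [hP]
    exact h1.and h2
  rw [Metric.eventually_nhds_iff] at hEv
  obtain ⟨ε, hε, hball⟩ := hEv
  refine ⟨ε, hε, ?_⟩
  intro P hPmem hdist
  obtain ⟨hposP, hgapP⟩ := hball hdist
  rw [hS2] at hPmem
  obtain ⟨hPsum, hPnn⟩ := hPmem
  have hCPint : ∀ k, cmap P k ∈ interior dom := fun k => hmem_int P hPnn k (hposP k)
  -- step 1 : F Pstar ≤ f Pstar (cmap P)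
  have step1 : F Pstar ≤ f Pstar (cmap P) := (hF Pstar).2 ⟨cmap P, hCPint, rfl⟩
  -- step 2 : f Pstar (cmap P) ≤ f P (cmap P)
  have step2 : f Pstar (cmap P) ≤ f P (cmap P) := by
    rw [hfswap, hfswap]
    refine Finset.sum_le_sum fun n _ => ?_
    have e1 : ∑ k, Pstar k n * w n * D (x n) (cmap P k)
        = w n * D (x n) (cmap P (kf n)) := by
      rw [Finset.sum_eq_single (kf n)
        (fun k _ hne => by rw [hPentry k n, if_neg hne]; ring)
        (fun h => absurd (Finset.mem_univ _) h)]
      rw [hkf n, one_mul]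
    have e2 : w n * D (x n) (cmap P (kf n))
        = ∑ k, P k n * w n * D (x n) (cmap P (kf n)) := by
      rw [show ∑ k, P k n * w n * D (x n) (cmap P (kf n))
          = (∑ k, P k n) * (w n * D (x n) (cmap P (kf n))) by
        rw [Finset.sum_mul]; exact Finset.sum_congr rfl fun k _ => by ring]
      rw [hPsum n, one_mul]
    rw [e1, e2]
    refine Finset.sum_le_sum fun k _ => ?_
    exact mul_le_mul_of_nonneg_left (hgapP n k) (mul_nonneg (hPnn k n) (hw n).le)
  -- step 3 : f P (cmap P) ≤ f P C' = F P
  obtain ⟨C', hC'int, hC'eq⟩ := (hF P).1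
  have step3 : f P (cmap P) ≤ f P C' := by
    rw [hf, hf]
    refine Finset.sum_le_sum fun k _ => ?_
    have hsm : ∑ n, (P k n * w n) • x n = (∑ n, P k n * w n) • cmap P k := by
      simp only [hcmap]
      rw [smul_inv_smul₀ (ne_of_gt (hposP k))]
    have key : ∀ (a : Fin d → ℝ), ∑ n, P k n * w n * D (x n) a
        = (∑ n, (P k n * w n) * φ (x n)) - (∑ n, P k n * w n) * φ a
          - (f' a) ((∑ n, P k n * w n) • cmap P k - (∑ n, P k n * w n) • a) := by
      intro a
      have hterm : ∀ n, P k n * w n * D (x n) a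
          = (P k n * w n) * φ (x n) - (P k n * w n) * φ a
            - (f' a) ((P k n * w n) • (x n - a)) := by
        intro n
        rw [hD, map_smul, smul_eq_mul]
        ring
      rw [Finset.sum_congr rfl fun n _ => hterm n]
      rw [Finset.sum_sub_distrib, Finset.sum_sub_distrib, ← map_sum]
      congr 2
      · rw [← Finset.sum_mul]
      · simp only [smul_sub]
        rw [Finset.sum_sub_distrib, hsm, ← Finset.sum_smul]
    rw [key (cmap P k), key (C' k)]
    rw [sub_self, map_zero, sub_zero]
    have hgrad := grad_le_aux hφc (hdiff (C' k) (hC'int k)) (interior_subset (hC'int k))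
      (interior_subset (hCPint k))
    have hlin : (f' (C' k)) ((∑ n, P k n * w n) • cmap P k - (∑ n, P k n * w n) • C' k)
        = (∑ n, P k n * w n) * (f' (C' k)) (cmap P k - C' k) := by
      rw [← smul_sub, map_smul, smul_eq_mul]
    rw [hlin]
    have hmul := mul_le_mul_of_nonneg_left hgrad (hposP k).le
    nlinarith [hmul]
  calc F Pstar ≤ f Pstar (cmap P) := step1
    _ ≤ f P (cmap P) := step2
    _ ≤ f P C' := step3
    _ = F P := hC'eq.symm
end
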